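/- Let d ∈ ℕ, d ≥ 1, and let K be a family of configurations over ℝ^d such that for every n ∈ ℕ, sup_{γ ∈ K} ( |γ ∩ B_n(0)| + δ⁻¹(γ, B_n(0)) ) < ∞ (i.e. K is relatively compact in the vague topology). Then there exists φ ∈ Φ such that sup_{γ ∈ K} ⟨γ × γ, Ψ_φ⟩ ≤ 1. -/

import Mathlib

open Filter Topology Metric Set Classical

noncomputable section

/-- A configuration over `ℝ^d`: a locally finite subset. -/
def IsConfiguration {d : ℕ} (γ : Set (EuclideanSpace ℝ (Fin d))) : Prop :=
  ∀ K : Set (EuclideanSpace ℝ (Fin d)), IsCompact K → (γ ∩ K).Finite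

/-- `δ⁻¹(γ, B)`: the reciprocal of the minimal distance between distinct points of `γ ∩ B`,
interpreted as `0` (= `sSup ∅` in `ℝ`) when `γ ∩ B` has fewer than two points. -/
def deltaInv {d : ℕ} (γ B : Set (EuclideanSpace ℝ (Fin d))) : ℝ :=
  sSup {r | ∃ x ∈ γ ∩ B, ∃ y ∈ γ ∩ B, x ≠ y ∧ r = 1 / dist x y}

/-- The class `Φ` of positive continuous rotation-invariant functions vanishing at infinity. -/
def IsPhi {d : ℕ} (φ : EuclideanSpace ℝ (Fin d) → ℝ) : Prop :=
  Continuous φ ∧ (∀ x, 0 < φ x) ∧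
    (∀ x y : EuclideanSpace ℝ (Fin d), ‖x‖ = ‖y‖ → φ x = φ y) ∧
    (∀ ε > (0 : ℝ), ∃ R : ℝ, ∀ x : EuclideanSpace ℝ (Fin d), R ≤ ‖x‖ → φ x < ε)

/-- `Ψ_φ(x,y) = φ(x)φ(y)(|x-y|+1)/|x-y|` off the diagonal, `0` on the diagonal. -/
def Psi {d : ℕ} (φ : EuclideanSpace ℝ (Fin d) → ℝ) (x y : EuclideanSpace ℝ (Fin d)) : ℝ :=
  if x = y then 0 else φ x * φ y * (dist x y + 1) / dist x y

/-- `⟨γ × γ, Ψ_φ⟩ ∈ [0,∞]`: the sum of `Ψ_φ` over all pairs of distinct points of `γ`. -/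
def pairPsi {d : ℕ} (φ : EuclideanSpace ℝ (Fin d) → ℝ)
    (γ : Set (EuclideanSpace ℝ (Fin d))) : ENNReal :=
  ∑' p : (γ ×ˢ γ : Set (EuclideanSpace ℝ (Fin d) × EuclideanSpace ℝ (Fin d))),
    ENNReal.ofReal (Psi φ p.1.1 p.1.2)

lemma tsum_prod_subtype_mul {α : Type*} (γ : Set α) (A : α → ENNReal) :
    ∑' p : ↥(γ ×ˢ γ), A p.1.1 * A p.1.2 = (∑' x : γ, A x) * (∑' x : γ, A x) := by
  have hind : ∀ p : α × α,
      (γ ×ˢ γ).indicator (fun q => A q.1 * A q.2) p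
        = γ.indicator A p.1 * γ.indicator A p.2 := by
    intro p
    by_cases h1 : p.1 ∈ γ <;> by_cases h2 : p.2 ∈ γ <;>
      simp [Set.indicator, Set.mem_prod, h1, h2]
  calc ∑' p : ↥(γ ×ˢ γ), A p.1.1 * A p.1.2
      = ∑' p : α × α, (γ ×ˢ γ).indicator (fun q => A q.1 * A q.2) p :=
        tsum_subtype (γ ×ˢ γ) (fun q => A q.1 * A q.2)
    _ = ∑' p : α × α, γ.indicator A p.1 * γ.indicator A p.2 := tsum_congr hind
    _ = ∑' (a : α) (b : α), γ.indicator A a * γ.indicator A b := ENNReal.tsum_prod'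
    _ = ∑' a : α, γ.indicator A a * ∑' b : α, γ.indicator A b :=
        tsum_congr fun a => ENNReal.tsum_mul_left
    _ = (∑' a : α, γ.indicator A a) * ∑' b : α, γ.indicator A b := ENNReal.tsum_mul_right
    _ = (∑' x : γ, A x) * (∑' x : γ, A x) := by rw [← tsum_subtype]

variable {d : ℕ}

lemma ratioSet_finite (γ B : Set (EuclideanSpace ℝ (Fin d))) (h : (γ ∩ B).Finite) :
    {r | ∃ x ∈ γ ∩ B, ∃ y ∈ γ ∩ B, x ≠ y ∧ r = 1 / dist x y}.Finite := by
  apply ((h.prod h).image (fun p => 1 / dist p.1 p.2)).subset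
  rintro r ⟨x, hx, y, hy, hxy, rfl⟩
  exact ⟨(x, y), ⟨hx, hy⟩, rfl⟩

lemma one_div_dist_le_deltaInv {γ B : Set (EuclideanSpace ℝ (Fin d))}
    (h : (γ ∩ B).Finite) {x y : EuclideanSpace ℝ (Fin d)}
    (hx : x ∈ γ ∩ B) (hy : y ∈ γ ∩ B) (hxy : x ≠ y) :
    1 / dist x y ≤ deltaInv γ B :=
  le_csSup (ratioSet_finite γ B h).bddAbove ⟨x, hx, y, hy, hxy, rfl⟩

lemma deltaInv_nonneg (γ B : Set (EuclideanSpace ℝ (Fin d))) : 0 ≤ deltaInv γ B := by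
  apply Real.sSup_nonneg
  rintro r ⟨x, hx, y, hy, hxy, rfl⟩
  positivity

/-- bump function: `1` on `[0,n]`, linear on `[n,n+1]`, `0` beyond. -/
def gfun (n : ℕ) (x : EuclideanSpace ℝ (Fin d)) : ℝ := max 0 (min 1 ((n : ℝ) + 1 - ‖x‖))

lemma gfun_nonneg (n : ℕ) (x : EuclideanSpace ℝ (Fin d)) : 0 ≤ gfun n x := le_max_left _ _

lemma gfun_le_one (n : ℕ) (x : EuclideanSpace ℝ (Fin d)) : gfun n x ≤ 1 :=
  max_le zero_le_one (min_le_left _ _)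

lemma gfun_eq_one {n : ℕ} {x : EuclideanSpace ℝ (Fin d)} (hx : ‖x‖ ≤ n) : gfun n x = 1 := by
  have : (1:ℝ) ≤ (n:ℝ) + 1 - ‖x‖ := by linarith
  simp [gfun, min_eq_left this, max_eq_right (zero_le_one)]

lemma gfun_eq_zero {n : ℕ} {x : EuclideanSpace ℝ (Fin d)} (hx : (n:ℝ) + 1 ≤ ‖x‖) :
    gfun n x = 0 := by
  have h1 : min 1 ((n : ℝ) + 1 - ‖x‖) ≤ 0 := le_trans (min_le_right _ _) (by linarith)
  simp [gfun, max_eq_left h1]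

lemma gfun_continuous (n : ℕ) : Continuous (gfun (d := d) n) :=
  continuous_const.max (continuous_const.min (continuous_const.sub continuous_norm))

def bseq (D : ℕ → ℝ) (n : ℕ) : ℝ := (1/2 : ℝ)^(n+2) / (D (n+2) * (1 + D (n+2)))

section bseq
variable {D : ℕ → ℝ} (hD : ∀ n, 1 ≤ D n) (hmono : Monotone D)
include hD

lemma bseq_pos (n : ℕ) : 0 < bseq D n := by
  have h1 := hD (n+2)
  apply div_pos (by positivity)
  nlinarith

lemma bseq_le (n : ℕ) : bseq D n ≤ (1/2:ℝ)^(n+2) := by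
  have h1 := hD (n+2)
  exact div_le_self (by positivity) (by nlinarith)

omit hD in
lemma summable_half_pow : Summable (fun n : ℕ => (1/2:ℝ)^(n+2)) := by
  have := (summable_geometric_of_lt_one (by norm_num : (0:ℝ) ≤ 1/2) (by norm_num)).mul_left
    ((1/2:ℝ)^2)
  refine this.congr fun n => ?_
  ring

lemma summable_bseq : Summable (bseq D) :=
  Summable.of_nonneg_of_le (fun n => (bseq_pos hD n).le) (bseq_le hD) summable_half_pow

lemma summable_bseq_gfun (x : EuclideanSpace ℝ (Fin d)) :
    Summable (fun n => bseq D n * gfun n x) := by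
  refine Summable.of_nonneg_of_le
    (fun n => mul_nonneg (bseq_pos hD n).le (gfun_nonneg n x)) (fun n => ?_) (summable_bseq hD)
  exact mul_le_of_le_one_right (bseq_pos hD n).le (gfun_le_one n x)

end bseq

def phiD (D : ℕ → ℝ) (x : EuclideanSpace ℝ (Fin d)) : ℝ := ∑' n, bseq D n * gfun n x

section phiD
variable {D : ℕ → ℝ} (hD : ∀ n, 1 ≤ D n) (hmono : Monotone D)

include hD in
lemma phiD_pos (x : EuclideanSpace ℝ (Fin d)) : 0 < phiD D x := by
  have h := Summable.le_tsum (summable_bseq_gfun hD x) ⌈‖x‖⌉₊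
    (fun j _ => mul_nonneg (bseq_pos hD j).le (gfun_nonneg j x))
  have h1 : gfun ⌈‖x‖⌉₊ x = 1 := gfun_eq_one (Nat.le_ceil _)
  rw [h1, mul_one] at h
  exact lt_of_lt_of_le (bseq_pos hD _) h

include hD in
lemma phiD_continuous : Continuous (phiD (d := d) D) := by
  refine continuous_tsum (fun n => (continuous_const.mul (gfun_continuous n)))
    (summable_bseq hD) (fun n x => ?_)
  rw [Real.norm_eq_abs, abs_of_nonneg (mul_nonneg (bseq_pos hD n).le (gfun_nonneg n x))]
  exact mul_le_of_le_one_right (bseq_pos hD n).le (gfun_le_one n x)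

lemma phiD_radial {x y : EuclideanSpace ℝ (Fin d)} (h : ‖x‖ = ‖y‖) : phiD D x = phiD D y := by
  unfold phiD
  exact tsum_congr fun n => by rw [gfun, gfun, h]

include hD hmono in
lemma phiD_le (x : EuclideanSpace ℝ (Fin d)) (m : ℕ) (hm : (m : ℝ) ≤ ‖x‖) :
    phiD D x ≤ (1/2 : ℝ)^(m+1) / (D (m+1) * (1 + D (m+1))) := by
  have hs := summable_bseq_gfun hD x (D := D)
  have h0 : ∑ i ∈ Finset.range m, bseq D i * gfun i x = 0 := by
    apply Finset.sum_eq_zero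
    intro i hi
    rw [Finset.mem_range] at hi
    have : (i:ℝ) + 1 ≤ ‖x‖ := le_trans (by exact_mod_cast Nat.succ_le_of_lt hi) hm
    rw [gfun_eq_zero this, mul_zero]
  have hsplit := Summable.sum_add_tsum_nat_add (f := fun n => bseq D n * gfun n x) m hs
  rw [h0, zero_add] at hsplit
  set A : ℝ := D (m+1) * (1 + D (m+1)) with hA
  have hDm : (0:ℝ) < D (m+1) := lt_of_lt_of_le one_pos (hD _)
  have hApos : 0 < A := by nlinarith [hD (m+1)]
  have hterm : ∀ i : ℕ, bseq D (i + m) * gfun (i + m) x ≤ (1/2:ℝ)^(i + m + 2) / A := by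
    intro i
    have h1 : bseq D (i+m) ≤ (1/2:ℝ)^(i + m + 2) / A := by
      rw [bseq, hA]
      apply div_le_div_of_nonneg_left (by positivity) hApos
      have hle : D (m+1) ≤ D (i+m+2) := hmono (by omega)
      nlinarith [hD (m+1), hD (i+m+2)]
    exact le_trans (mul_le_of_le_one_right (bseq_pos hD _).le (gfun_le_one _ x)) h1
  have hsum2 : Summable (fun i : ℕ => (1/2:ℝ)^(i + m + 2) / A) := by
    refine ((summable_geometric_of_lt_one (by norm_num : (0:ℝ) ≤ 1/2) (by norm_num)).mul_right
      ((1/2:ℝ)^(m+2) / A)).congr fun i => ?_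
    rw [pow_add]
    ring
  have hle2 : phiD D x ≤ ∑' i : ℕ, (1/2:ℝ)^(i + m + 2) / A := by
    rw [phiD, ← hsplit]
    exact Summable.tsum_le_tsum hterm ((summable_nat_add_iff m).2 hs) hsum2
  refine hle2.trans (le_of_eq ?_)
  have hre : ∀ i : ℕ, (1/2:ℝ)^(i + m + 2) / A = (1/2:ℝ)^i * ((1/2:ℝ)^(m+2) / A) := by
    intro i
    rw [pow_add]
    ring
  rw [tsum_congr hre, tsum_mul_right,
    tsum_geometric_of_lt_one (by norm_num : (0:ℝ) ≤ 1/2) (by norm_num)]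
  have : ((1:ℝ) - 1/2)⁻¹ = 2 := by norm_num
  rw [this, pow_succ]
  ring

end phiD


/-- The weight function combining `phiD` with the growth bound. -/
def hfunD (D : ℕ → ℝ) (x : EuclideanSpace ℝ (Fin d)) : ℝ :=
  phiD D x * (1 + D (⌊‖x‖⌋₊ + 1))

section hfunD
variable {D : ℕ → ℝ} (hD : ∀ n, 1 ≤ D n) (hmono : Monotone D)

include hD in
lemma hfunD_nonneg (x : EuclideanSpace ℝ (Fin d)) : 0 ≤ hfunD D x :=
  mul_nonneg (phiD_pos hD x).le (by nlinarith [hD (⌊‖x‖⌋₊ + 1)])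

include hD hmono in
lemma hfunD_le (x : EuclideanSpace ℝ (Fin d)) :
    hfunD D x ≤ (1/2:ℝ)^(⌊‖x‖⌋₊+1) / D (⌊‖x‖⌋₊+1) := by
  set m := ⌊‖x‖⌋₊ with hm
  have h1 := phiD_le hD hmono x m (Nat.floor_le (norm_nonneg _))
  have hDm : (0:ℝ) < D (m+1) := lt_of_lt_of_le one_pos (hD _)
  have h2 : (0:ℝ) < 1 + D (m + 1) := by linarith
  calc hfunD D x = phiD D x * (1 + D (m + 1)) := rfl
    _ ≤ ((1/2:ℝ)^(m+1) / (D (m+1) * (1 + D (m+1)))) * (1 + D (m + 1)) :=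
        mul_le_mul_of_nonneg_right h1 h2.le
    _ = (1/2:ℝ)^(m+1) / D (m+1) := by
        field_simp

include hD hmono in
lemma psi_pt_le {γ : Set (EuclideanSpace ℝ (Fin d))} (hconf : IsConfiguration γ)
    (hdelta : ∀ n : ℕ, deltaInv γ (closedBall (0 : EuclideanSpace ℝ (Fin d)) (n:ℕ)) ≤ D n)
    {x y : EuclideanSpace ℝ (Fin d)} (hx : x ∈ γ) (hy : y ∈ γ) :
    ENNReal.ofReal (Psi (phiD D) x y)
      ≤ ENNReal.ofReal (hfunD D x) * ENNReal.ofReal (hfunD D y) := by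
  by_cases hxy : x = y
  · simp [Psi, hxy]
  rw [← ENNReal.ofReal_mul (hfunD_nonneg hD x)]
  apply ENNReal.ofReal_le_ofReal
  rw [Psi, if_neg hxy]
  set nx := ⌊‖x‖⌋₊ with hnx
  set ny := ⌊‖y‖⌋₊ with hny
  set n := max nx ny + 1 with hn
  have hxB : x ∈ closedBall (0 : EuclideanSpace ℝ (Fin d)) (n:ℕ) := by
    rw [mem_closedBall_zero_iff]
    have h1 : ‖x‖ < (nx:ℝ) + 1 := Nat.lt_floor_add_one _
    have h2 : (nx:ℝ) + 1 ≤ (n:ℕ) := by exact_mod_cast (by omega : nx + 1 ≤ n)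
    linarith
  have hyB : y ∈ closedBall (0 : EuclideanSpace ℝ (Fin d)) (n:ℕ) := by
    rw [mem_closedBall_zero_iff]
    have h1 : ‖y‖ < (ny:ℝ) + 1 := Nat.lt_floor_add_one _
    have h2 : (ny:ℝ) + 1 ≤ (n:ℕ) := by exact_mod_cast (by omega : ny + 1 ≤ n)
    linarith
  have hfin : (γ ∩ closedBall (0 : EuclideanSpace ℝ (Fin d)) (n:ℕ)).Finite :=
    hconf _ (isCompact_closedBall _ _)
  have hd1 : (0:ℝ) < dist x y := dist_pos.mpr hxy
  have hinv : 1 / dist x y ≤ D n :=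
    le_trans (one_div_dist_le_deltaInv hfin ⟨hx, hxB⟩ ⟨hy, hyB⟩ hxy) (hdelta n)
  have hφx := phiD_pos hD x
  have hφy := phiD_pos hD y
  have hprod : 1 + D n ≤ (1 + D (nx+1)) * (1 + D (ny+1)) := by
    rcases le_total nx ny with hc | hc
    · have h1 : D n ≤ D (ny+1) := hmono (by omega)
      nlinarith [hD (nx+1), hD (ny+1)]
    · have h1 : D n ≤ D (nx+1) := hmono (by omega)
      nlinarith [hD (nx+1), hD (ny+1)]
  have hone : (1:ℝ) ≤ D n * dist x y := by
    have := (div_le_iff₀ hd1).mp hinv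
    linarith
  have hfrac : (dist x y + 1) / dist x y ≤ 1 + D n := by
    rw [div_le_iff₀ hd1]
    nlinarith
  calc phiD D x * phiD D y * (dist x y + 1) / dist x y
      = phiD D x * phiD D y * ((dist x y + 1) / dist x y) := by ring
    _ ≤ phiD D x * phiD D y * (1 + D n) :=
        mul_le_mul_of_nonneg_left hfrac (mul_pos hφx hφy).le
    _ ≤ phiD D x * phiD D y * ((1 + D (nx+1)) * (1 + D (ny+1))) :=
        mul_le_mul_of_nonneg_left hprod (mul_pos hφx hφy).le
    _ = hfunD D x * hfunD D y := by
        rw [hfunD, hfunD]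
        ring

set_option maxHeartbeats 2000000 in
include hD hmono in
lemma tsum_hfunD_le_one {γ : Set (EuclideanSpace ℝ (Fin d))} (hconf : IsConfiguration γ)
    (hcount : ∀ n : ℕ,
      ((γ ∩ closedBall (0 : EuclideanSpace ℝ (Fin d)) (n:ℕ)).ncard : ℝ) ≤ D n) :
    ∑' x : γ, ENNReal.ofReal (hfunD D (x : EuclideanSpace ℝ (Fin d))) ≤ 1 := by
  have hDpos : ∀ m, (0:ℝ) < D m := fun m => lt_of_lt_of_le one_pos (hD m)
  set q : ↥γ → ℕ := fun x => ⌊‖(x : EuclideanSpace ℝ (Fin d))‖⌋₊ with hq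
  set u : ℕ → ℝ := fun m => (1/2:ℝ)^(m+1) / D (m+1) with hu
  have hupt : ∀ x : ↥γ, ENNReal.ofReal (hfunD D (x : EuclideanSpace ℝ (Fin d)))
      ≤ ENNReal.ofReal (u (q x)) := by
    intro x
    apply ENNReal.ofReal_le_ofReal
    show hfunD D (x : EuclideanSpace ℝ (Fin d))
      ≤ (1/2:ℝ)^(⌊‖(x : EuclideanSpace ℝ (Fin d))‖⌋₊+1) / D (⌊‖(x : EuclideanSpace ℝ (Fin d))‖⌋₊+1)
    exact hfunD_le hD hmono (x : EuclideanSpace ℝ (Fin d))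
  have hfib : ∑' x : ↥γ, ENNReal.ofReal (u (q x))
      = ∑' (m : ℕ), ∑' (x : {x : ↥γ // q x = m}), ENNReal.ofReal (u m) := by
    rw [← (Equiv.sigmaFiberEquiv q).tsum_eq (fun x => ENNReal.ofReal (u (q x))),
      ENNReal.tsum_sigma']
    refine tsum_congr fun m => tsum_congr fun x => ?_
    show ENNReal.ofReal (u (q x.1)) = ENNReal.ofReal (u m)
    rw [x.2]
  have hcard : ∀ m : ℕ, ∑' (_ : {x : ↥γ // q x = m}), ENNReal.ofReal (u m)
      ≤ ENNReal.ofReal (D (m+1)) * ENNReal.ofReal (u m) := by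
    intro m
    have hfinite : (γ ∩ closedBall (0 : EuclideanSpace ℝ (Fin d)) ((m+1 : ℕ))).Finite :=
      hconf _ (isCompact_closedBall _ _)
    haveI := hfinite.to_subtype
    have hmem : ∀ x : {x : ↥γ // q x = m}, (x.1 : EuclideanSpace ℝ (Fin d))
        ∈ γ ∩ closedBall (0 : EuclideanSpace ℝ (Fin d)) ((m+1 : ℕ)) := by
      intro x
      refine ⟨x.1.2, ?_⟩
      rw [mem_closedBall_zero_iff]
      have h1 : ‖(x.1 : EuclideanSpace ℝ (Fin d))‖
          < (⌊‖(x.1 : EuclideanSpace ℝ (Fin d))‖⌋₊ : ℝ) + 1 := Nat.lt_floor_add_one _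
      have h2 : ⌊‖(x.1 : EuclideanSpace ℝ (Fin d))‖⌋₊ = m := x.2
      rw [h2] at h1
      push_cast
      linarith
    set j : {x : ↥γ // q x = m}
        → ↥(γ ∩ closedBall (0 : EuclideanSpace ℝ (Fin d)) ((m+1 : ℕ))) :=
      fun x => ⟨x.1.1, hmem x⟩ with hj
    have hjinj : Function.Injective j := by
      intro a b hab
      have h' : (j a).1 = (j b).1 := congrArg Subtype.val hab
      simp only [hj] at h'
      exact Subtype.ext (Subtype.ext h')
    haveI : Finite {x : ↥γ // q x = m} := Finite.of_injective j hjinj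
    have hcard1 : (Nat.card {x : ↥γ // q x = m} : ℝ) ≤ D (m+1) := by
      have h1 := Nat.card_le_card_of_injective j hjinj
      rw [Nat.card_coe_set_eq] at h1
      calc (Nat.card {x : ↥γ // q x = m} : ℝ)
          ≤ ((γ ∩ closedBall (0 : EuclideanSpace ℝ (Fin d)) ((m+1 : ℕ))).ncard : ℝ) := by
            exact_mod_cast h1
        _ ≤ D (m+1) := hcount (m+1)
    cases nonempty_fintype {x : ↥γ // q x = m}
    rw [tsum_fintype, Finset.sum_const, nsmul_eq_mul]
    refine mul_le_mul_left ?_ _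
    rw [← ENNReal.ofReal_natCast]
    apply ENNReal.ofReal_le_ofReal
    rw [Finset.card_univ, ← Nat.card_eq_fintype_card]
    exact hcard1
  have hsumhalf : Summable (fun m : ℕ => (1/2:ℝ)^(m+1)) := by
    refine ((summable_geometric_of_lt_one (by norm_num : (0:ℝ) ≤ 1/2)
      (by norm_num)).mul_right (1/2)).congr fun m => ?_
    rw [pow_succ]
  have hfinal : ∑' m : ℕ, ENNReal.ofReal (D (m+1)) * ENNReal.ofReal (u m) = 1 := by
    have h1 : ∀ m : ℕ, ENNReal.ofReal (D (m+1)) * ENNReal.ofReal (u m)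
        = ENNReal.ofReal ((1/2:ℝ)^(m+1)) := by
      intro m
      rw [← ENNReal.ofReal_mul (hDpos (m+1)).le]
      congr 1
      simp only [hu]
      rw [mul_div_cancel₀ _ (hDpos (m+1)).ne']
    rw [tsum_congr h1, ← ENNReal.ofReal_tsum_of_nonneg (fun m => by positivity) hsumhalf]
    have h2 : ∑' m : ℕ, (1/2:ℝ)^(m+1) = 1 := by
      have h3 : ∀ m : ℕ, (1/2:ℝ)^(m+1) = (1/2:ℝ)^m * (1/2) := fun m => pow_succ _ _
      rw [tsum_congr h3, tsum_mul_right,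
        tsum_geometric_of_lt_one (by norm_num) (by norm_num)]
      norm_num
    rw [h2, ENNReal.ofReal_one]
  calc ∑' x : γ, ENNReal.ofReal (hfunD D (x : EuclideanSpace ℝ (Fin d)))
      ≤ ∑' x : ↥γ, ENNReal.ofReal (u (q x)) := ENNReal.tsum_le_tsum hupt
    _ = ∑' (m : ℕ), ∑' (_ : {x : ↥γ // q x = m}), ENNReal.ofReal (u m) := hfib
    _ ≤ ∑' m : ℕ, ENNReal.ofReal (D (m+1)) * ENNReal.ofReal (u m) :=
        ENNReal.tsum_le_tsum hcard
    _ = 1 := hfinal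

end hfunD

set_option maxHeartbeats 1000000 in
/-- For every relatively compact family `K` of configurations there is `φ ∈ Φ`
with `sup_{γ ∈ K} ⟨γ × γ, Ψ_φ⟩ ≤ 1`. -/
theorem exists_phi_pairPsi_le_one_of_relatively_compact
    (d : ℕ) (hd : 1 ≤ d) (K : Set (Set (EuclideanSpace ℝ (Fin d))))
    (hK : ∀ γ ∈ K, IsConfiguration γ)
    (hb : ∀ n : ℕ, ∃ C : ℝ, ∀ γ ∈ K,
      ((γ ∩ closedBall (0 : EuclideanSpace ℝ (Fin d)) n).ncard : ℝ)
        + deltaInv γ (closedBall (0 : EuclideanSpace ℝ (Fin d)) n) ≤ C) :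
    ∃ φ : EuclideanSpace ℝ (Fin d) → ℝ, IsPhi φ ∧ ∀ γ ∈ K, pairPsi φ γ ≤ 1 := by
  classical
  choose C hC using hb
  set D : ℕ → ℝ := fun n => 1 + ∑ k ∈ Finset.range (n+1), |C k| with hDdef
  have hD : ∀ n, 1 ≤ D n := fun n =>
    le_add_of_nonneg_right (Finset.sum_nonneg fun k _ => abs_nonneg _)
  have hmono : Monotone D := by
    intro a b hab
    have h1 := Finset.sum_le_sum_of_subset_of_nonneg
      (Finset.range_subset_range.mpr (by omega : a + 1 ≤ b + 1)) (fun k _ _ => abs_nonneg (C k))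
    simpa [hDdef] using add_le_add_left h1 1
  have hCD : ∀ n, C n ≤ D n := by
    intro n
    have h1 : |C n| ≤ ∑ k ∈ Finset.range (n+1), |C k| :=
      Finset.single_le_sum (fun k _ => abs_nonneg (C k)) (Finset.self_mem_range_succ n)
    have h2 := le_abs_self (C n)
    rw [hDdef]
    dsimp only
    linarith
  have hcount : ∀ γ ∈ K, ∀ n : ℕ,
      ((γ ∩ closedBall (0 : EuclideanSpace ℝ (Fin d)) (n:ℕ)).ncard : ℝ) ≤ D n := by
    intro γ hγ n
    have h1 := hC n γ hγ
    have h2 := deltaInv_nonneg γ (closedBall (0 : EuclideanSpace ℝ (Fin d)) (n:ℕ))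
    linarith [hCD n]
  have hdelta : ∀ γ ∈ K, ∀ n : ℕ,
      deltaInv γ (closedBall (0 : EuclideanSpace ℝ (Fin d)) (n:ℕ)) ≤ D n := by
    intro γ hγ n
    have h1 := hC n γ hγ
    have h2 : (0:ℝ) ≤ ((γ ∩ closedBall (0 : EuclideanSpace ℝ (Fin d)) (n:ℕ)).ncard : ℝ) :=
      Nat.cast_nonneg _
    linarith [hCD n]
  refine ⟨phiD D, ⟨phiD_continuous hD, phiD_pos hD, fun x y hxy => phiD_radial hxy, ?_⟩, ?_⟩
  · -- vanishing at infinity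
    intro ε hε
    obtain ⟨n, hn⟩ := exists_pow_lt_of_lt_one hε (by norm_num : (1/2:ℝ) < 1)
    refine ⟨n, fun x hx => ?_⟩
    have h1 := phiD_le hD hmono x n hx
    have h2 : (1/2:ℝ)^(n+1) / (D (n+1) * (1 + D (n+1))) ≤ (1/2:ℝ)^(n+1) :=
      div_le_self (by positivity) (by nlinarith [hD (n+1)])
    have h3 : (1/2:ℝ)^(n+1) ≤ (1/2:ℝ)^n :=
      pow_le_pow_of_le_one (by norm_num) (by norm_num) (Nat.le_succ n)
    linarith
  · -- the pair-sum bound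
    intro γ hγ
    have hSle : ∑' x : γ, ENNReal.ofReal (hfunD D (x : EuclideanSpace ℝ (Fin d))) ≤ 1 :=
      tsum_hfunD_le_one hD hmono (hK γ hγ) (hcount γ hγ)
    have step1 : pairPsi (phiD D) γ
        ≤ ∑' p : ↥(γ ×ˢ γ), ENNReal.ofReal (hfunD D p.1.1) * ENNReal.ofReal (hfunD D p.1.2) := by
      rw [pairPsi]
      exact ENNReal.tsum_le_tsum fun p =>
        psi_pt_le hD hmono (hK γ hγ) (hdelta γ hγ) p.2.1 p.2.2
    calc pairPsi (phiD D) γ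
        ≤ (∑' x : γ, ENNReal.ofReal (hfunD D (x : EuclideanSpace ℝ (Fin d))))
          * (∑' x : γ, ENNReal.ofReal (hfunD D (x : EuclideanSpace ℝ (Fin d)))) :=
          step1.trans (le_of_eq
            (tsum_prod_subtype_mul γ (fun x => ENNReal.ofReal (hfunD D x))))
      _ ≤ 1 * 1 := mul_le_mul' hSle hSle
      _ = 1 := one_mul 1

end
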